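/- Let N ⊆ A₁ and N ⊆ A₂ be unital inclusions of tracial von Neumann algebras with trace-preserving conditional expectations E₁, E₂, and let (M, E) = (A₁,E₁) *_N (A₂,E₂) be the amalgamated free product with trace τ = τ₁∘E. Suppose there are unitaries u₁ ∈ A₁ and u₂, u₃ ∈ A₂ such that: (a) E₁(x)=0 implies E₁(u₁xu₁*)=0 for x ∈ A₁; (b) E₁(u₁) = E₂(u₂) = E₂(u₃) = E₂(u₂*u₃) = 0. Then for every y ∈ M, ‖y − E(y)‖₂ ≤ 14·max_{1≤i≤3} ‖yu_i − u_i y‖₂. -/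

import Mathlib

namespace Stmt4Aux

variable {M : Type*} [Ring M] [StarRing M] [Algebra ℂ M] [StarModule ℂ M]

/-- Alternating words. -/
inductive Word (A : Bool → StarSubalgebra ℂ M) (E : M →ₗ[ℂ] M) : Bool → Bool → M → Prop
  | single {b : Bool} {a : M} : a ∈ A b → E a = 0 → Word A E b b a
  | cons {b l : Bool} {a w : M} : a ∈ A b → E a = 0 → Word A E (!b) l w → Word A E b l (a * w)

/-- Bundled hypotheses. -/
structure Setup (N : StarSubalgebra ℂ M) (A : Bool → StarSubalgebra ℂ M) (E : M →ₗ[ℂ] M) :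
    Prop where
  hN : ∀ b, N ≤ A b
  hErange : ∀ x : M, E x ∈ N
  hEid : ∀ x ∈ N, E x = x
  hEbimod : ∀ n ∈ N, ∀ m ∈ N, ∀ x : M, E (n * x * m) = n * E x * m
  hEstar : ∀ x : M, E (star x) = star (E x)
  hfree : ∀ (n : ℕ) (f : Fin n → M) (ι : Fin n → Bool),
      (∀ i, f i ∈ A (ι i) ∧ E (f i) = 0) →
      (∀ (i : Fin n) (h : (i : ℕ) + 1 < n), ι i ≠ ι ⟨(i : ℕ) + 1, h⟩) →
      1 ≤ n → E ((List.ofFn f).prod) = 0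

variable {N : StarSubalgebra ℂ M} {A : Bool → StarSubalgebra ℂ M} {E : M →ₗ[ℂ] M}

namespace Setup

variable (H : Setup N A E)
include H

theorem E_mul_n {x n : M} (hn : n ∈ N) : E (x * n) = E x * n := by
  have := H.hEbimod 1 N.one_mem n hn x
  simpa [H.hEid 1 N.one_mem] using this

theorem E_n_mul {x n : M} (hn : n ∈ N) : E (n * x) = n * E x := by
  have := H.hEbimod n hn 1 N.one_mem x
  simpa [H.hEid 1 N.one_mem] using this

theorem E_star_zero {x : M} (h : E x = 0) : E (star x) = 0 := by
  rw [H.hEstar, h, star_zero]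

end Setup

/-- concatenation of compatible words -/
theorem Word.concat {s l l' : Bool} {w w' : M} (h : Word A E s l w)
    (h' : Word A E (!l) l' w') : Word A E s l' (w * w') := by
  induction h with
  | single ha hEa => exact Word.cons ha hEa h'
  | cons ha hEa _ ih => rw [mul_assoc]; exact Word.cons ha hEa (ih h')

theorem Word.star' (H : Setup N A E) {s l : Bool} {w : M} (h : Word A E s l w) :
    Word A E l s (star w) := by
  induction h with
  | single ha hEa => exact Word.single (star_mem ha) (H.E_star_zero hEa)
  | @cons b l a w ha hEa h ih =>
      rw [star_mul]
      have hsa : Word A E b b (star a) := Word.single (star_mem ha) (H.E_star_zero hEa)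
      exact ih.concat (by simpa using hsa)

theorem Word.n_mul (H : Setup N A E) {s l : Bool} {n w : M} (hn : n ∈ N)
    (h : Word A E s l w) : Word A E s l (n * w) := by
  induction h with
  | single ha hEa =>
      exact Word.single (mul_mem (H.hN _ hn) ha) (by rw [H.E_n_mul hn, hEa, mul_zero])
  | cons ha hEa h _ =>
      rw [← mul_assoc]
      exact Word.cons (mul_mem (H.hN _ hn) ha) (by rw [H.E_n_mul hn, hEa, mul_zero]) h

theorem Word.mul_n (H : Setup N A E) {s l : Bool} {n w : M} (h : Word A E s l w)
    (hn : n ∈ N) : Word A E s l (w * n) := by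
  induction h with
  | single ha hEa =>
      exact Word.single (mul_mem ha (H.hN _ hn)) (by rw [H.E_mul_n hn, hEa, zero_mul])
  | cons ha hEa _ ih => rw [mul_assoc]; exact Word.cons ha hEa ih

/-- Every word has zero expectation. -/
theorem Word.E_zero (H : Setup N A E) {s l : Bool} {w : M} (h : Word A E s l w) :
    E w = 0 := by
  -- convert to a list and use freeness
  suffices hh : ∃ L : List (M × Bool), w = (L.map Prod.fst).prod ∧
      (L.map Prod.snd).Chain' (· ≠ ·) ∧ (∀ p ∈ L, p.1 ∈ A p.2 ∧ E p.1 = 0) ∧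
      (L.map Prod.snd).head? = some s ∧ L ≠ [] by
    obtain ⟨L, hw, hchain, hmem, -, hne⟩ := hh
    have hlen : 1 ≤ L.length := by
      cases L with | nil => exact absurd rfl hne | cons _ _ => simp
    have hof : List.ofFn (fun i : Fin L.length => (L[(i : ℕ)].1 : M)) = L.map Prod.fst :=
      List.ofFn_getElem_eq_map L Prod.fst
    have := H.hfree L.length (fun i => L[(i : ℕ)].1) (fun i => L[(i : ℕ)].2)
      (fun i => hmem _ (L.getElem_mem _)) ?_ hlen
    · rw [hw, ← hof]; exact this
    · intro i hi
      have hi' : (i : ℕ) < (L.map Prod.snd).length - 1 := by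
        simp only [List.length_map]; omega
      have hc := List.isChain_iff_getElem.1 hchain i (by omega)
      simpa using hc
  induction h with
  | @single b a ha hEa =>
      exact ⟨[(a, b)], by simp, List.isChain_singleton _, by simp [ha, hEa], by simp, by simp⟩
  | @cons b l a w ha hEa h ih =>
      obtain ⟨L, hw, hchain, hmem, hhead, hne⟩ := ih
      refine ⟨(a, b) :: L, by simp [hw], ?_, ?_, by simp, by simp⟩
      · rw [List.map_cons, List.Chain', List.isChain_cons]
        exact ⟨fun y hy => by
          rw [hhead] at hy; simp at hy; subst hy; simp, hchain⟩
      · intro p hp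
        rcases List.mem_cons.1 hp with rfl | hp
        · exact ⟨ha, hEa⟩
        · exact hmem _ hp


section Modules

variable (A : Bool → StarSubalgebra ℂ M) (E : M →ₗ[ℂ] M)

/-- span of all words starting on side `s` -/
def Dstart (s : Bool) : Submodule ℂ M := Submodule.span ℂ {w | ∃ l, Word A E s l w}

/-- span of all words ending on side `l` -/
def Dend (l : Bool) : Submodule ℂ M := Submodule.span ℂ {w | ∃ s, Word A E s l w}

/-- span of all words -/
def Dall : Submodule ℂ M := Submodule.span ℂ {w | ∃ s l, Word A E s l w}

end Modules

/-- the `N`-submodule -/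
def NS (N : StarSubalgebra ℂ M) : Submodule ℂ M := Subalgebra.toSubmodule N.toSubalgebra

theorem mem_NS {N : StarSubalgebra ℂ M} {x : M} : x ∈ NS N ↔ x ∈ N := Iff.rfl

theorem word_mem_Dstart {s l : Bool} {w : M} (h : Word A E s l w) : w ∈ Dstart A E s :=
  Submodule.subset_span ⟨l, h⟩

theorem word_mem_Dend {s l : Bool} {w : M} (h : Word A E s l w) : w ∈ Dend A E l :=
  Submodule.subset_span ⟨s, h⟩

theorem word_mem_Dall {s l : Bool} {w : M} (h : Word A E s l w) : w ∈ Dall A E :=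
  Submodule.subset_span ⟨s, l, h⟩

theorem Dstart_le_Dall (s : Bool) : Dstart A E s ≤ Dall A E :=
  Submodule.span_le.2 fun w ⟨l, h⟩ => word_mem_Dall h

theorem Dend_le_Dall (l : Bool) : Dend A E l ≤ Dall A E :=
  Submodule.span_le.2 fun w ⟨s, h⟩ => word_mem_Dall h

theorem mul_left_span {a : M} {S : Set M} {T : Submodule ℂ M} (h : ∀ v ∈ S, a * v ∈ T) :
    ∀ x ∈ Submodule.span ℂ S, a * x ∈ T := by
  intro x hx
  induction hx using Submodule.span_induction with
  | mem v hv => exact h v hv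
  | zero => simpa using T.zero_mem
  | add v w _ _ hv hw => rw [mul_add]; exact T.add_mem hv hw
  | smul c v _ hv => rw [mul_smul_comm]; exact T.smul_mem c hv

theorem mul_right_span {a : M} {S : Set M} {T : Submodule ℂ M} (h : ∀ v ∈ S, v * a ∈ T) :
    ∀ x ∈ Submodule.span ℂ S, x * a ∈ T := by
  intro x hx
  induction hx using Submodule.span_induction with
  | mem v hv => exact h v hv
  | zero => simpa using T.zero_mem
  | add v w _ _ hv hw => rw [add_mul]; exact T.add_mem hv hw
  | smul c v _ hv => rw [smul_mul_assoc]; exact T.smul_mem c hv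

variable (H : Setup N A E)
include H

/-- a letter with zero expectation, multiplied by `n ∈ N` on either side, is such a letter -/
theorem Setup.letter_mul_n {b : Bool} {a n : M} (ha : a ∈ A b) (hEa : E a = 0) (hn : n ∈ N) :
    Word A E b b (a * n) :=
  Word.single (mul_mem ha (H.hN b hn)) (by rw [H.E_mul_n hn, hEa, zero_mul])

theorem Setup.n_mul_letter {b : Bool} {a n : M} (hn : n ∈ N) (ha : a ∈ A b) (hEa : E a = 0) :
    Word A E b b (n * a) :=
  Word.single (mul_mem (H.hN b hn) ha) (by rw [H.E_n_mul hn, hEa, mul_zero])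

/-- splitting an element of `A b` into its `N`-part and its zero-expectation part -/
theorem Setup.letter_split {b : Bool} {a : M} (ha : a ∈ A b) :
    a - E a ∈ A b ∧ E (a - E a) = 0 ∧ E a ∈ N := by
  refine ⟨sub_mem ha (H.hN b (H.hErange a)), ?_, H.hErange a⟩
  rw [map_sub, H.hEid (E a) (H.hErange a), sub_self]

/-- Merge lemma: a word times a letter on the ending side. -/
theorem Setup.word_mul_letter {s l : Bool} {w b : M} (h : Word A E s l w)
    (hb : b ∈ A l) (hEb : E b = 0) :
    w * b ∈ Dstart A E s ⊔ (if s = l then NS N else ⊥) := by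
  induction h with
  | @single β a ha hEa =>
      -- a * b ∈ A β; split into E-part and zero-expectation part
      obtain ⟨h1, h2, h3⟩ := H.letter_split (mul_mem ha hb)
      have : a * b = (a * b - E (a * b)) + E (a * b) := by abel
      rw [this]
      refine Submodule.add_mem _ (Submodule.mem_sup_left ?_) (Submodule.mem_sup_right ?_)
      · exact word_mem_Dstart (Word.single h1 h2)
      · simpa [mem_NS] using h3
  | @cons β l a w' ha hEa h' ih =>
      rw [mul_assoc]
      rcases Submodule.mem_sup.1 (ih hb) with ⟨x1, hx1, x2, hx2, hx⟩
      rw [← hx, mul_add]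
      refine Submodule.add_mem _ (Submodule.mem_sup_left ?_) (Submodule.mem_sup_left ?_)
      · refine mul_left_span (fun v hv => ?_) x1 hx1
        obtain ⟨lv, hv⟩ := hv
        exact word_mem_Dstart (Word.cons ha hEa hv)
      · by_cases hbl : (!β) = l
        · rw [if_pos hbl] at hx2
          exact word_mem_Dstart (H.letter_mul_n ha hEa hx2)
        · rw [if_neg hbl] at hx2
          simp only [Submodule.mem_bot] at hx2
          rw [hx2, mul_zero]; exact (Dstart A E β).zero_mem

/-- Master product lemma. -/
theorem Setup.word_mul_word {s' l' : Bool} {w₂ : M} (h₂ : Word A E s' l' w₂) :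
    ∀ {s l : Bool} {w₁ : M}, Word A E s l w₁ →
      w₁ * w₂ ∈ Dstart A E s ⊔ Dend A E l' ⊔ (if s = l' then NS N else ⊥) := by
  induction h₂ with
  | @single β b hbm hbE =>
      intro s l w₁ h₁
      by_cases hl : l = β
      · subst hl
        rcases Submodule.mem_sup.1 (H.word_mul_letter h₁ hbm hbE) with ⟨x1, hx1, x2, hx2, hx⟩
        rw [← hx]
        exact Submodule.add_mem _ (Submodule.mem_sup_left (Submodule.mem_sup_left hx1))
          (Submodule.mem_sup_right hx2)
      · have hβ : β = !l := by cases l <;> cases β <;> simp_all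
        subst hβ
        exact Submodule.mem_sup_left (Submodule.mem_sup_left
          (word_mem_Dstart (h₁.concat (Word.single hbm hbE))))
  | @cons β l'' b w₂' hbm hbE h₂' ih =>
      intro s l w₁ h₁
      rw [← mul_assoc]
      by_cases hl : l = β
      · subst hl
        rcases Submodule.mem_sup.1 (H.word_mul_letter h₁ hbm hbE) with ⟨x1, hx1, x2, hx2, hx⟩
        rw [← hx, add_mul]
        refine Submodule.add_mem _ ?_ ?_
        · refine mul_right_span (fun v hv => ?_) x1 hx1
          obtain ⟨lv, hv⟩ := hv
          exact ih hv
        · by_cases hsl : s = l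
          · rw [if_pos hsl] at hx2
            exact Submodule.mem_sup_left (Submodule.mem_sup_right
              (word_mem_Dend (Word.n_mul H hx2 h₂')))
          · rw [if_neg hsl] at hx2
            simp only [Submodule.mem_bot] at hx2
            rw [hx2, zero_mul]; exact Submodule.zero_mem _
      · have hβ : β = !l := by
          cases l <;> cases β
          exacts [absurd rfl hl, rfl, rfl, absurd rfl hl]
        subst hβ
        exact ih (h₁.concat (Word.single hbm hbE))


theorem Setup.E_Dall {x : M} (hx : x ∈ Dall A E) : E x = 0 := by
  induction hx using Submodule.span_induction with
  | mem v hv => obtain ⟨s, l, hv⟩ := hv; exact hv.E_zero H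
  | zero => exact map_zero E
  | add v w _ _ hv hw => rw [map_add, hv, hw, add_zero]
  | smul c v _ hv => rw [map_smul, hv, smul_zero]

theorem Setup.E_Dend {l : Bool} {x : M} (hx : x ∈ Dend A E l) : E x = 0 :=
  H.E_Dall (Dend_le_Dall l hx)

omit H in
theorem bool_ne_not {a b : Bool} (h : a ≠ b) : b = !a := by cases a <;> cases b <;> simp_all

/-- prepending a letter to a word: general form -/
theorem Setup.letter_mul_word {β s l : Bool} {b w : M} (hb : b ∈ A β) (hEb : E b = 0)
    (h : Word A E s l w) (hne : β ≠ l) : b * w ∈ Dend A E l := by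
  cases h with
  | single ha hEa =>
      refine word_mem_Dend (Word.cons hb hEb ?_)
      rw [← bool_ne_not hne]
      exact Word.single ha hEa
  | cons ha hEa h' =>
      rename_i a w'
      by_cases hβ0 : s = !β
      · rw [hβ0] at ha h'
        exact word_mem_Dend (Word.cons hb hEb (Word.cons ha hEa (by simpa using h')))
      · have hβ0' : s = β := by cases β <;> cases s <;> simp_all
        rw [hβ0'] at ha h'
        rw [← mul_assoc]
        obtain ⟨h1, h2, h3⟩ := H.letter_split (mul_mem hb ha)
        have hsplit : b * a = (b * a - E (b * a)) + E (b * a) := by abel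
        rw [hsplit, add_mul]
        exact Submodule.add_mem _ (word_mem_Dend (Word.cons h1 h2 h'))
          (word_mem_Dend (Word.n_mul H h3 h'))

/-- conjugation by a unitary-like element of `A true` maps words ending on the `false` side
into the span of words ending on the `true` side. -/
theorem Setup.conj_word {u : M} (hu : u ∈ A true) (hEu : E u = 0)
    {s : Bool} {w : M} (h : Word A E s false w) :
    u * (w * star u) ∈ Dend A E true := by
  have hEus : E (star u) = 0 := H.E_star_zero hEu
  have hsu : Word A E true true (star u) := Word.single (star_mem hu) hEus
  cases h with
  | single ha hEa =>
      exact word_mem_Dend (Word.cons hu hEu (Word.cons ha hEa hsu))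
  | cons ha hEa h' =>
      rename_i a w'
      have h'' : Word A E (!s) true (w' * star u) := h'.concat (by simpa using hsu)
      cases s with
      | false =>
          have hre : u * (a * w' * star u) = u * (a * (w' * star u)) := by noncomm_ring
          rw [hre]
          exact word_mem_Dend (Word.cons hu hEu (Word.cons ha hEa (by simpa using h'')))
      | true =>
          have hre : u * (a * w' * star u) = (u * a) * (w' * star u) := by noncomm_ring
          obtain ⟨h1, h2, h3⟩ := H.letter_split (mul_mem hu ha)
          have hsplit : u * a = (u * a - E (u * a)) + E (u * a) := by abel
          rw [hre, hsplit, add_mul]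
          refine Submodule.add_mem _ (word_mem_Dend (Word.cons h1 h2 (by simpa using h'')))
            (word_mem_Dend (Word.n_mul H h3 (by simpa using h'')))

theorem star_Dall {x : M} (hx : x ∈ Dall A E) : star x ∈ Dall A E := by
  induction hx using Submodule.span_induction with
  | mem v hv => obtain ⟨s, l, hv⟩ := hv; exact word_mem_Dall (hv.star' H)
  | zero => simpa using (Dall A E).zero_mem
  | add v w _ _ hv hw => rw [star_add]; exact Submodule.add_mem _ hv hw
  | smul c v _ hv => rw [star_smul]; exact Submodule.smul_mem _ _ hv

/-- The decomposition of the algebra generated by `A true` and `A false`. -/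
theorem Setup.all_mem (hgen : A true ⊔ A false = ⊤) (y : M) :
    y ∈ NS N ⊔ Dall A E := by
  set S : Submodule ℂ M := NS N ⊔ Dall A E with hS
  have hword_mul : ∀ x ∈ Dall A E, ∀ y ∈ Dall A E, x * y ∈ S := by
    intro x hx y hy
    refine mul_right_span (fun v hv => mul_left_span (fun w hw => ?_) y hy) x hx
    obtain ⟨s, l, hv⟩ := hv
    obtain ⟨s', l', hw⟩ := hw
    have := H.word_mul_word hw hv
    rcases Submodule.mem_sup.1 this with ⟨x1, hx1, x2, hx2, hxx⟩
    rcases Submodule.mem_sup.1 hx1 with ⟨y1, hy1, y2, hy2, hyy⟩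
    rw [← hxx, ← hyy]
    refine Submodule.add_mem _ (Submodule.add_mem _ ?_ ?_) ?_
    · exact Submodule.mem_sup_right (Dstart_le_Dall _ hy1)
    · exact Submodule.mem_sup_right (Dend_le_Dall _ hy2)
    · split at hx2
      · exact Submodule.mem_sup_left hx2
      · simp only [Submodule.mem_bot] at hx2; rw [hx2]; exact S.zero_mem
  have hmul : ∀ x ∈ S, ∀ y ∈ S, x * y ∈ S := by
    intro x hx y hy
    rcases Submodule.mem_sup.1 hx with ⟨n1, hn1, d1, hd1, rfl⟩
    rcases Submodule.mem_sup.1 hy with ⟨n2, hn2, d2, hd2, rfl⟩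
    rw [mem_NS] at hn1 hn2
    rw [add_mul, mul_add, mul_add]
    refine Submodule.add_mem _ (Submodule.add_mem _ ?_ ?_) (Submodule.add_mem _ ?_ ?_)
    · exact Submodule.mem_sup_left (mem_NS.2 (mul_mem hn1 hn2))
    · exact Submodule.mem_sup_right (mul_left_span (fun v hv => by
        obtain ⟨s, l, hv⟩ := hv; exact word_mem_Dall (hv.n_mul H hn1)) d2 hd2)
    · exact Submodule.mem_sup_right (mul_right_span (fun v hv => by
        obtain ⟨s, l, hv⟩ := hv; exact word_mem_Dall (hv.mul_n H hn2)) d1 hd1)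
    · exact hword_mul d1 hd1 d2 hd2
  let S' : StarSubalgebra ℂ M :=
    { carrier := (S : Set M)
      mul_mem' := fun hx hy => hmul _ hx _ hy
      one_mem' := Submodule.mem_sup_left (mem_NS.2 N.one_mem)
      add_mem' := fun hx hy => S.add_mem hx hy
      zero_mem' := S.zero_mem
      algebraMap_mem' := fun r => Submodule.mem_sup_left (mem_NS.2 (N.algebraMap_mem r))
      star_mem' := by
        intro x hx
        rcases Submodule.mem_sup.1 hx with ⟨n1, hn1, d1, hd1, rfl⟩
        rw [star_add]
        exact S.add_mem (Submodule.mem_sup_left (mem_NS.2 (star_mem hn1)))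
          (Submodule.mem_sup_right (star_Dall H hd1)) }
  have hA : ∀ b, A b ≤ S' := by
    intro b a haA
    obtain ⟨h1, h2, h3⟩ := H.letter_split haA
    have : a = E a + (a - E a) := by abel
    show a ∈ S
    rw [this]
    exact S.add_mem (Submodule.mem_sup_left (mem_NS.2 h3))
      (Submodule.mem_sup_right (word_mem_Dall (Word.single h1 h2)))
  have : (⊤ : StarSubalgebra ℂ M) ≤ S' := by
    rw [← hgen]; exact sup_le (hA true) (hA false)
  exact this (StarSubalgebra.mem_top (x := y))


/-- conjugation, span version -/
theorem Setup.conj_span {u : M} (hu : u ∈ A true) (hEu : E u = 0)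
    {z : M} (hz : z ∈ Dend A E false) : u * z * star u ∈ Dend A E true := by
  induction hz using Submodule.span_induction with
  | mem w hw =>
      obtain ⟨s, hw⟩ := hw
      rw [mul_assoc]
      exact H.conj_word hu hEu hw
  | zero => simpa using (Dend A E true).zero_mem
  | add a b _ _ hA hB => rw [mul_add, add_mul]; exact Submodule.add_mem _ hA hB
  | smul c a _ hA =>
      rw [mul_smul_comm, smul_mul_assoc]; exact Submodule.smul_mem _ _ hA

/-- product of incompatible words lands in the span of all words -/
theorem Setup.word_mul_word_Dall {s l s' l' : Bool} {w₁ w₂ : M} (h₁ : Word A E s l w₁)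
    (h₂ : Word A E s' l' w₂) (hne : s ≠ l') : w₁ * w₂ ∈ Dall A E := by
  have hle : Dstart A E s ⊔ Dend A E l' ⊔ (if s = l' then NS N else ⊥) ≤ Dall A E := by
    rw [if_neg hne]
    exact sup_le (sup_le (Dstart_le_Dall s) (Dend_le_Dall l')) bot_le
  exact hle (H.word_mul_word h₂ h₁)

/-- span version of letter_mul_word -/
theorem Setup.letter_mul_span {β l : Bool} {b z : M} (hb : b ∈ A β) (hEb : E b = 0)
    (hne : β ≠ l) (hz : z ∈ Dend A E l) : b * z ∈ Dend A E l := by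
  refine mul_left_span (fun w hw => ?_) z hz
  obtain ⟨s, hw⟩ := hw
  exact H.letter_mul_word hb hEb hw hne

end Stmt4Aux

namespace Stmt4Aux

variable {M : Type*} [Ring M] [StarRing M] [Algebra ℂ M] [StarModule ℂ M]
variable {N : StarSubalgebra ℂ M} {A : Bool → StarSubalgebra ℂ M} {E : M →ₗ[ℂ] M}
variable {τ : M →ₗ[ℂ] ℂ}

/-- full bundled hypotheses including the trace -/
structure FullSetup (N : StarSubalgebra ℂ M) (A : Bool → StarSubalgebra ℂ M)
    (E : M →ₗ[ℂ] M) (τ : M →ₗ[ℂ] ℂ) extends Setup N A E : Prop where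
  htr : ∀ x y : M, τ (x * y) = τ (y * x)
  hEτ : ∀ x : M, τ (E x) = τ x
  him : ∀ x : M, (τ (star x * x)).im = 0

namespace FullSetup

variable (K : FullSetup N A E τ)
include K

/-- conjugate symmetry of the sesquilinear form -/
theorem inner_conj (x y : M) : τ (star y * x) = (starRingEnd ℂ) (τ (star x * y)) := by
  have him := K.him
  have h1 : ∀ a b : M, (τ (star a * b) + τ (star b * a)).im = 0 := by
    intro a b
    have := him (a + b)
    rw [star_add, add_mul, mul_add, mul_add] at this
    simp only [map_add, Complex.add_im] at this ⊢
    have ha := him a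
    have hb := him b
    linarith
  have h2 : (τ (star x * y) - τ (star y * x)).re = 0 := by
    have := h1 x ((Complex.I : ℂ) • y)
    rw [star_smul, smul_mul_assoc, mul_smul_comm, map_smul, map_smul] at this
    simp only [Complex.star_def, Complex.conj_I, smul_eq_mul, neg_mul, Complex.add_im,
      Complex.neg_im, Complex.mul_im, Complex.I_re, Complex.I_im] at this
    simp only [Complex.sub_re]
    linarith
  have h3 := h1 x y
  apply Complex.ext
  · have h2' : (τ (star x * y)).re - (τ (star y * x)).re = 0 := by
      simpa [Complex.sub_re] using h2
    simp only [Complex.conj_re]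
    linarith
  · simp only [Complex.conj_im]
    simp only [Complex.add_im] at h3
    linarith

theorem tau_star (x : M) : τ (star x) = (starRingEnd ℂ) (τ x) := by
  have := K.inner_conj 1 x
  simpa using this

theorem tau_Dall {x : M} (hx : x ∈ Dall A E) : τ x = 0 := by
  rw [← K.hEτ x, K.toSetup.E_Dall hx, map_zero]

theorem tau_word_word {s l s' l' : Bool} {w₁ w₂ : M} (h₁ : Word A E s l w₁)
    (h₂ : Word A E s' l' w₂) (hne : s ≠ l') : τ (w₁ * w₂) = 0 :=
  K.tau_Dall (K.word_mul_word_Dall h₁ h₂ hne)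

/-- `τ (n* x) = 0` for `x` in the span of all words. -/
theorem tau_n_word {n x : M} (hn : n ∈ N) (hx : x ∈ Dall A E) : τ (star n * x) = 0 := by
  rw [← K.hEτ]
  rw [K.toSetup.E_n_mul (star_mem hn), K.toSetup.E_Dall hx, mul_zero, map_zero]

/-- orthogonality `F ⟂ G`. -/
theorem tau_FG {x y : M} (hx : x ∈ Dend A E true) (hy : y ∈ Dend A E false) :
    τ (star x * y) = 0 := by
  induction hx using Submodule.span_induction with
  | mem v hv =>
      obtain ⟨sv, hv⟩ := hv
      have hsv : Word A E true sv (star v) := hv.star' K.toSetup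
      refine K.tau_Dall (mul_left_span (a := star v) (fun w hw => ?_) y hy)
      obtain ⟨sw, hw⟩ := hw
      exact K.word_mul_word_Dall hsv hw (by simp)
  | zero => simp
  | add a b _ _ hA hB => rw [star_add, add_mul, map_add, hA, hB, add_zero]
  | smul c a _ hA => rw [star_smul, smul_mul_assoc, map_smul, hA, smul_zero]


/-- `F ⟂ A₂`. -/
theorem tau_F_A {x a : M} (hx : x ∈ Dend A E true) (ha : a ∈ A false) :
    τ (star x * a) = 0 := by
  induction hx using Submodule.span_induction with
  | mem v hv =>
      obtain ⟨sv, hv⟩ := hv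
      have hsv : Word A E true sv (star v) := hv.star' K.toSetup
      obtain ⟨h1, h2, h3⟩ := K.toSetup.letter_split ha
      have hsplit : a = (a - E a) + E a := by abel
      rw [hsplit, mul_add, map_add]
      have t1 : τ (star v * (a - E a)) = 0 :=
        K.tau_word_word hsv (Word.single (b := false) h1 h2) (by simp)
      have t2 : τ (star v * E a) = 0 := by
        rw [← K.hEτ, K.toSetup.E_mul_n h3, hsv.E_zero K.toSetup, zero_mul, map_zero]
      rw [t1, t2, add_zero]
  | zero => simp
  | add p q _ _ hp hq => rw [star_add, add_mul, map_add, hp, hq, add_zero]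
  | smul c p _ hp => rw [star_smul, smul_mul_assoc, map_smul, hp, smul_zero]

theorem tau_a_mul {a z : M} (ha : a ∈ A false) (hEa : E a = 0)
    (hz : z ∈ Dstart A E true ⊔ Dend A E true ⊔ NS N) : τ (a * z) = 0 := by
  rcases Submodule.mem_sup.1 hz with ⟨z12, hz12, z3, hz3, rfl⟩
  rcases Submodule.mem_sup.1 hz12 with ⟨z1, hz1, z2, hz2, rfl⟩
  rw [mul_add, mul_add, map_add, map_add]
  have t1 : τ (a * z1) = 0 := by
    refine K.tau_Dall (mul_left_span (fun w hw => ?_) z1 hz1)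
    obtain ⟨lw, hw⟩ := hw
    exact word_mem_Dall (Word.cons (b := false) ha hEa hw)
  have t2 : τ (a * z2) = 0 :=
    K.tau_Dall (Dend_le_Dall _ (K.toSetup.letter_mul_span (β := false) ha hEa (by simp) hz2))
  have t3 : τ (a * z3) = 0 := by
    rw [← K.hEτ, K.toSetup.E_mul_n (mem_NS.1 hz3), hEa, zero_mul, map_zero]
  rw [t1, t2, t3, add_zero, add_zero]

/-- The key cross-orthogonality. -/
theorem tau_cross {a b x y : M} (ha : a ∈ A false) (hEa : E a = 0)
    (hb : b ∈ A false) (hEb : E b = 0)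
    (hx : x ∈ Dend A E true) (hy : y ∈ Dend A E true) :
    τ (a * (star x * (b * y))) = 0 := by
  have hby : b * y ∈ Dend A E true := K.toSetup.letter_mul_span (β := false) hb hEb (by simp) hy
  induction hx using Submodule.span_induction with
  | mem v hv =>
      obtain ⟨sv, hv⟩ := hv
      have hsv : Word A E true sv (star v) := hv.star' K.toSetup
      refine K.tau_a_mul ha hEa (mul_left_span (fun w hw => ?_) _ hby)
      obtain ⟨sw, hw⟩ := hw
      have := K.toSetup.word_mul_word hw hsv
      simpa using this
  | zero => simp
  | add p q _ _ hp hq =>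
      rw [star_add, add_mul, mul_add, map_add, hp, hq, add_zero]
  | smul c p _ hp =>
      rw [star_smul, smul_mul_assoc, mul_smul_comm, map_smul, hp, smul_zero]

end FullSetup

theorem arith_final {a b p2 p3 d : ℝ} (ha0 : 0 ≤ a) (hb0 : 0 ≤ b) (hp20 : 0 ≤ p2)
    (hp30 : 0 ≤ p3) (hd0 : 0 ≤ d) (h1 : b ≤ a + d) (h2 : p2 ^ 2 + p3 ^ 2 ≤ b ^ 2)
    (h3 : a - d ≤ p2) (h4 : a - d ≤ p3) : a + b ≤ 14 * d := by
  by_cases had : a ≤ d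
  · linarith
  · push_neg at had
    have h5 : (0:ℝ) ≤ a - d := by linarith
    have hsq2 : (a - d) ^ 2 ≤ p2 ^ 2 := pow_le_pow_left₀ h5 h3 2
    have hsq3 : (a - d) ^ 2 ≤ p3 ^ 2 := pow_le_pow_left₀ h5 h4 2
    have hgb : b ^ 2 ≤ (a + d) ^ 2 := pow_le_pow_left₀ hb0 h1 2
    have hkey2 : 2 * (a - d) ^ 2 ≤ (a + d) ^ 2 := by linarith
    have ha65 : a ≤ 13 * d / 2 := by
      nlinarith [mul_nonneg hd0 hd0, sq_nonneg (a - 3 * d),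
        mul_nonneg (le_of_lt (lt_of_le_of_lt hd0 had)) hd0]
    linarith

theorem Dall_le_sup : Dall A E ≤ Dend A E true ⊔ Dend A E false := by
  refine Submodule.span_le.2 fun w hw => ?_
  obtain ⟨s, l, hw⟩ := hw
  cases l
  · exact Submodule.mem_sup_right (word_mem_Dend hw)
  · exact Submodule.mem_sup_left (word_mem_Dend hw)

end Stmt4Aux



open Stmt4Aux


/-- Let `(M, E) = (A₁,E₁) *_N (A₂,E₂)` be an amalgamated free product of
tracial von Neumann algebras over `N`, with trace `τ = τ₁ ∘ E` (modeled: `M` is a unital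
complex star algebra with faithful positive tracial state `τ`, generated by unital star
subalgebras `A₁, A₂ ⊇ N`, carrying a trace-preserving conditional expectation `E` onto `N`
restricting to `E₁, E₂`, such that alternating words of `E`-kernel elements of `A₁, A₂`
are in the kernel of `E`).  Suppose `u₁ ∈ A₁`, `u₂, u₃ ∈ A₂` are unitaries with
(a) `E₁ x = 0 → E₁(u₁ x u₁*) = 0` for `x ∈ A₁`, and
(b) `E(u₁) = E(u₂) = E(u₃) = E(u₂* u₃) = 0`.
Then for every `y ∈ M`, `‖y − E y‖₂ ≤ 14 · max_{1≤i≤3} ‖y uᵢ − uᵢ y‖₂`,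
where `‖x‖₂ = (τ(x* x))^{1/2}`. -/
theorem stmt4 {M : Type*} [Ring M] [StarRing M] [Algebra ℂ M] [StarModule ℂ M]
    (τ : M →ₗ[ℂ] ℂ)
    (htr : ∀ x y : M, τ (x * y) = τ (y * x))
    (hτ1 : τ 1 = 1)
    (hpos : ∀ x : M, 0 ≤ (τ (star x * x)).re ∧ (τ (star x * x)).im = 0)
    (hfaith : ∀ x : M, τ (star x * x) = 0 → x = 0)
    (N A₁ A₂ : StarSubalgebra ℂ M) (hN1 : N ≤ A₁) (hN2 : N ≤ A₂)
    (hgen : A₁ ⊔ A₂ = ⊤)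
    (E : M →ₗ[ℂ] M)
    (hErange : ∀ x : M, E x ∈ N)
    (hEid : ∀ x ∈ N, E x = x)
    (hEbimod : ∀ n ∈ N, ∀ m ∈ N, ∀ x : M, E (n * x * m) = n * E x * m)
    (hEτ : ∀ x : M, τ (E x) = τ x)
    (hEstar : ∀ x : M, E (star x) = star (E x))
    (hfree : ∀ (n : ℕ) (f : Fin n → M) (ι : Fin n → Bool),
      (∀ i, (if ι i then f i ∈ A₁ else f i ∈ A₂) ∧ E (f i) = 0) →
      (∀ (i : Fin n) (h : (i : ℕ) + 1 < n), ι i ≠ ι ⟨(i : ℕ) + 1, h⟩) →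
      1 ≤ n → E ((List.ofFn f).prod) = 0)
    (u₁ u₂ u₃ : M) (hu₁A : u₁ ∈ A₁) (hu₂A : u₂ ∈ A₂) (hu₃A : u₃ ∈ A₂)
    (hu₁ : u₁ * star u₁ = 1 ∧ star u₁ * u₁ = 1)
    (hu₂ : u₂ * star u₂ = 1 ∧ star u₂ * u₂ = 1)
    (hu₃ : u₃ * star u₃ = 1 ∧ star u₃ * u₃ = 1)
    (ha : ∀ x ∈ A₁, E x = 0 → E (u₁ * x * star u₁) = 0)
    (hb : E u₁ = 0 ∧ E u₂ = 0 ∧ E u₃ = 0 ∧ E (star u₂ * u₃) = 0)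
    (y : M) :
    Real.sqrt (τ (star (y - E y) * (y - E y))).re ≤
      14 * max (Real.sqrt (τ (star (y * u₁ - u₁ * y) * (y * u₁ - u₁ * y))).re)
        (max (Real.sqrt (τ (star (y * u₂ - u₂ * y) * (y * u₂ - u₂ * y))).re)
          (Real.sqrt (τ (star (y * u₃ - u₃ * y) * (y * u₃ - u₃ * y))).re)) := by
  classical
  obtain ⟨hbu₁, hbu₂, hbu₃, hbu₂₃⟩ := hb
  set A : Bool → StarSubalgebra ℂ M := fun b => if b then A₁ else A₂ with hAdef
  have hA1 : A true = A₁ := rfl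
  have hA2 : A false = A₂ := rfl
  have HS : Setup N A E := by
    refine ⟨?_, hErange, hEid, hEbimod, hEstar, ?_⟩
    · intro b; cases b
      · exact hN2
      · exact hN1
    · intro n f ι hmem hadj hn
      refine hfree n f ι (fun i => ?_) hadj hn
      have := hmem i
      cases hι : ι i
      · rw [hι] at this; simpa [hA2] using this
      · rw [hι] at this; simpa [hA1] using this
  have K : FullSetup N A E τ := ⟨HS, htr, hEτ, fun z => (hpos z).2⟩
  -- inner ℂ product space structure
  letI core : InnerProductSpace.Core ℂ M :=
    { inner := fun a b => τ (star a * b)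
      conj_inner_symm := fun a b => by
        show (starRingEnd ℂ) (τ (star b * a)) = τ (star a * b)
        rw [K.inner_conj a b, Complex.conj_conj]
      re_inner_nonneg := fun z => (hpos z).1
      definite := fun z hz => hfaith z hz
      add_left := fun p q r => by
        show τ (star (p + q) * r) = τ (star p * r) + τ (star q * r)
        rw [star_add, add_mul, map_add]
      smul_left := fun p q r => by
        show τ (star (r • p) * q) = (starRingEnd ℂ) r * τ (star p * q)
        rw [star_smul, smul_mul_assoc, map_smul, smul_eq_mul, Complex.star_def] }
  letI : NormedAddCommGroup M := core.toNormedAddCommGroup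
  letI : InnerProductSpace ℂ M := InnerProductSpace.ofCore core.toCore
  have hip : ∀ a b : M, (inner ℂ a b : ℂ) = τ (star a * b) := fun a b => rfl
  have hnorm : ∀ z : M, ‖z‖ = Real.sqrt (τ (star z * z)).re := fun z => rfl
  have hCS : ∀ a b : M, Complex.re (inner ℂ a b : ℂ) ≤ ‖a‖ * ‖b‖ := by
    intro a b
    calc Complex.re (inner ℂ a b : ℂ) ≤ ‖(inner ℂ a b : ℂ)‖ := Complex.re_le_norm _
    _ ≤ ‖a‖ * ‖b‖ := norm_inner_le_norm a b
  have hadd : ∀ a b : M, (inner ℂ a b : ℂ) = 0 → ‖a + b‖ ^ 2 = ‖a‖ ^ 2 + ‖b‖ ^ 2 := by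
    intro a b h0
    have := norm_add_sq (𝕜 := ℂ) a b
    simpa [h0] using this
  have hsub : ∀ a b : M, ‖a - b‖ ^ 2 = ‖a‖ ^ 2 - 2 * Complex.re (inner ℂ a b : ℂ) + ‖b‖ ^ 2 :=
    fun a b => by simpa using norm_sub_sq (𝕜 := ℂ) a b
  have hsqn : ∀ z : M, (inner ℂ z z : ℂ) = ((‖z‖ : ℂ)) ^ 2 :=
    fun z => inner_self_eq_norm_sq_to_K z
  -- decomposition
  have hdecomp : ∀ z : M, ∃ n fz gz, n ∈ N ∧ fz ∈ Dend A E true ∧ gz ∈ Dend A E false ∧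
      z = n + fz + gz := by
    intro z
    have hz := HS.all_mem (show A true ⊔ A false = ⊤ from hgen) z
    rcases Submodule.mem_sup.1 hz with ⟨n, hn, d, hd, hsum⟩
    rcases Submodule.mem_sup.1 (Dall_le_sup hd) with ⟨fz, hfz, gz, hgz, hsum2⟩
    exact ⟨n, fz, gz, mem_NS.1 hn, hfz, hgz, by rw [← hsum, ← hsum2, add_assoc]⟩
  obtain ⟨n₀, f, g, hn₀, hf, hg, hy⟩ := hdecomp y
  have hEy : E y = n₀ := by
    rw [hy, map_add, map_add, hEid n₀ hn₀, HS.E_Dend hf, HS.E_Dend hg, add_zero, add_zero]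
  -- rewrite goal
  rw [← hnorm (y - E y), ← hnorm (y * u₁ - u₁ * y), ← hnorm (y * u₂ - u₂ * y),
    ← hnorm (y * u₃ - u₃ * y)]
  have hx : y - E y = f + g := by rw [hEy, hy]; abel
  rw [hx]
  set c₁ := y * u₁ - u₁ * y with hc₁
  set c₂ := y * u₂ - u₂ * y with hc₂
  set c₃ := y * u₃ - u₃ * y with hc₃
  set d := max ‖c₁‖ (max ‖c₂‖ ‖c₃‖) with hdd
  have hd0 : (0:ℝ) ≤ d := le_trans (norm_nonneg c₁) (le_max_left _ _)
  have hc₁d : ‖c₁‖ ≤ d := le_max_left _ _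
  have hc₂d : ‖c₂‖ ≤ d := le_trans (le_max_left _ _) (le_max_right _ _)
  have hc₃d : ‖c₃‖ ≤ d := le_trans (le_max_right _ _) (le_max_right _ _)
  -- unitary invariance of the norm
  have hnl : ∀ v z : M, star v * v = 1 → ‖v * z‖ = ‖z‖ := by
    intro v z hv
    rw [hnorm, hnorm]
    have e : star (v * z) * (v * z) = star z * (star v * v * z) := by
      rw [star_mul]; noncomm_ring
    rw [e, hv, one_mul]
  have hnr : ∀ v z : M, v * star v = 1 → ‖z * v‖ = ‖z‖ := by
    intro v z hv
    rw [hnorm, hnorm]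
    have e : star (z * v) * (z * v) = star v * (star z * z * v) := by
      rw [star_mul]; noncomm_ring
    rw [e, htr (star v) (star z * z * v), mul_assoc, hv, mul_one]
  -- inner ℂ product orthogonality conveniences
  have hiNW : ∀ n ∈ N, ∀ z ∈ Dall A E, (inner ℂ (n : M) z : ℂ) = 0 :=
    fun n hn z hz => K.tau_n_word hn hz
  have hiWN : ∀ n ∈ N, ∀ z ∈ Dall A E, (inner ℂ z (n : M) : ℂ) = 0 := by
    intro n hn z hz
    rw [← inner_conj_symm, hiNW n hn z hz, map_zero]
  have hiFG : ∀ p ∈ Dend A E true, ∀ q ∈ Dend A E false, (inner ℂ p q : ℂ) = 0 :=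
    fun p hp q hq => K.tau_FG hp hq
  have hiGF : ∀ p ∈ Dend A E false, ∀ q ∈ Dend A E true, (inner ℂ p q : ℂ) = 0 := by
    intro p hp q hq
    rw [← inner_conj_symm, hiFG q hq p hp, map_zero]
  have hFD : Dend A E true ≤ Dall A E := Dend_le_Dall true
  have hGD : Dend A E false ≤ Dall A E := Dend_le_Dall false
  -- Piece 1 : ‖g‖ ≤ ‖f‖ + d
  have hgfd : ‖g‖ ≤ ‖f‖ + d := by
    set η := u₁ * g * star u₁ with hηdef
    have hηF : η ∈ Dend A E true := HS.conj_span (show u₁ ∈ A true from hu₁A) hbu₁ hg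
    have hηn : ‖η‖ = ‖g‖ := by
      rw [hηdef, mul_assoc, hnl u₁ _ hu₁.2, hnr (star u₁) g (by rw [star_star, hu₁.2])]
    set e₁ := u₁ * y * star u₁ - y with he₁def
    have he₁ : ‖e₁‖ ≤ d := by
      have h1 : e₁ = (-c₁) * star u₁ := by
        have h2 : (y * u₁) * star u₁ = y := by rw [mul_assoc, hu₁.1, mul_one]
        rw [he₁def, hc₁, neg_sub, sub_mul, h2]
      rw [h1, hnr (star u₁) _ (by rw [star_star, hu₁.2]), norm_neg]
      exact hc₁d
    have hkey : (inner ℂ g g : ℂ) = inner ℂ η f + inner ℂ η e₁ := by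
      have h1 : (inner ℂ η (u₁ * y * star u₁) : ℂ) = inner ℂ g y := by
        rw [hip, hip]
        have e : star η * (u₁ * y * star u₁) = u₁ * (star g * ((star u₁ * u₁) * (y * star u₁))) := by
          rw [hηdef, star_mul, star_mul, star_star]; noncomm_ring
        rw [e, hu₁.2, one_mul, htr u₁ (star g * (y * star u₁))]
        have e2 : (star g * (y * star u₁)) * u₁ = star g * y * (star u₁ * u₁) := by noncomm_ring
        rw [e2, hu₁.2, mul_one]
      have h2 : u₁ * y * star u₁ = y + e₁ := by rw [he₁def]; abel
      have h3 : (inner ℂ η y : ℂ) = inner ℂ η f := by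
        rw [hy, inner_add_right, inner_add_right,
          hiWN n₀ hn₀ η (hFD hηF), hiFG η hηF g hg]
        ring
      have h4 : (inner ℂ g y : ℂ) = inner ℂ g g := by
        rw [hy, inner_add_right, inner_add_right, hiWN n₀ hn₀ g (hGD hg),
          hiGF g hg f hf]
        ring
      calc (inner ℂ g g : ℂ) = inner ℂ g y := h4.symm
      _ = inner ℂ η (u₁ * y * star u₁) := h1.symm
      _ = inner ℂ η y + inner ℂ η e₁ := by rw [h2, inner_add_right]
      _ = inner ℂ η f + inner ℂ η e₁ := by rw [h3]
    have hre : ‖g‖ ^ 2 = Complex.re ((inner ℂ η f : ℂ) + inner ℂ η e₁) := by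
      rw [← hkey, hsqn g]
      simp [← Complex.ofReal_pow]
    have hineq : ‖g‖ ^ 2 ≤ ‖g‖ * (‖f‖ + d) := by
      have r1 : Complex.re (inner ℂ η f : ℂ) ≤ ‖g‖ * ‖f‖ := by
        have := hCS η f; rwa [hηn] at this
      have r2 : Complex.re (inner ℂ η e₁ : ℂ) ≤ ‖g‖ * d := by
        have h5 := hCS η e₁
        rw [hηn] at h5
        exact le_trans h5 (mul_le_mul_of_nonneg_left he₁ (norm_nonneg g))
      rw [hre, Complex.add_re, mul_add]
      linarith
    by_cases hg0 : ‖g‖ = 0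
    · rw [hg0]; positivity
    · have hgpos : 0 < ‖g‖ := lt_of_le_of_ne (norm_nonneg g) (Ne.symm hg0)
      refine (mul_le_mul_iff_of_pos_left hgpos).1 ?_
      rw [← pow_two]
      exact hineq
  -- Piece 2 for u₂ and u₃
  obtain ⟨n₂, f₂, g₂, hn₂, hf₂, hg₂, hz₂⟩ := hdecomp (star u₂ * y * u₂)
  obtain ⟨n₃, f₃, g₃, hn₃, hf₃, hg₃, hz₃⟩ := hdecomp (star u₃ * y * u₃)
  have piece : ∀ u nᵢ fᵢ gᵢ : M, u ∈ A₂ → E u = 0 → u * star u = 1 → star u * u = 1 →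
      nᵢ ∈ N → fᵢ ∈ Dend A E true → gᵢ ∈ Dend A E false →
      star u * y * u = nᵢ + fᵢ + gᵢ →
      ‖f - fᵢ‖ ≤ ‖y * u - u * y‖ ∧
      (inner ℂ (u * fᵢ * star u) (f + g) : ℂ) = ((‖fᵢ‖ : ℂ)) ^ 2 ∧
      ‖u * fᵢ * star u‖ = ‖fᵢ‖ ∧ (inner ℂ f (u * fᵢ * star u) : ℂ) = 0 := by
    intro u nᵢ fᵢ gᵢ huA hEu huu' hu'u hnᵢ hfᵢ hgᵢ hzdec
    have huA' : u ∈ A false := huA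
    refine ⟨?_, ?_, ?_, ?_⟩
    · -- ‖f - fᵢ‖ ≤ commutator norm
      have he : star u * y * u - y = star u * (y * u - u * y) := by
        rw [mul_sub, ← mul_assoc, ← mul_assoc, hu'u, one_mul]
      have hnec : ‖star u * y * u - y‖ = ‖y * u - u * y‖ := by
        rw [he]; exact hnl (star u) _ (by rw [star_star, huu'])
      have hdiff : star u * y * u - y = (fᵢ - f) + ((nᵢ - n₀) + (gᵢ - g)) := by
        rw [hzdec, hy]; abel
      have hcross : (inner ℂ (fᵢ - f) ((nᵢ - n₀) + (gᵢ - g)) : ℂ) = 0 := by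
        rw [inner_add_right, hiWN (nᵢ - n₀) (sub_mem hnᵢ hn₀) (fᵢ - f)
          (hFD (sub_mem hfᵢ hf)), hiFG (fᵢ - f) (sub_mem hfᵢ hf) (gᵢ - g) (sub_mem hgᵢ hg)]
        ring
      have hpy := hadd (fᵢ - f) ((nᵢ - n₀) + (gᵢ - g)) hcross
      have h6 : ‖fᵢ - f‖ ^ 2 ≤ ‖star u * y * u - y‖ ^ 2 := by
        rw [hdiff, hpy]
        have := sq_nonneg ‖(nᵢ - n₀) + (gᵢ - g)‖
        linarith
      have h7 : ‖fᵢ - f‖ ≤ ‖star u * y * u - y‖ :=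
        (pow_le_pow_iff_left₀ (norm_nonneg _) (norm_nonneg _) two_ne_zero).1 h6
      rw [norm_sub_rev]
      rw [hnec] at h7
      exact h7
    · -- inner ℂ (ξ) (f+g) = ‖fᵢ‖²
      have hxy : f + g = y - n₀ := by rw [hy]; abel
      have hA' : (inner ℂ (u * fᵢ * star u) y : ℂ) = inner ℂ fᵢ (star u * y * u) := by
        rw [hip, hip]
        have e : star (u * fᵢ * star u) * y = u * (star fᵢ * (star u * y)) := by
          rw [star_mul, star_mul, star_star]; noncomm_ring
        rw [e, htr u (star fᵢ * (star u * y))]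
        congr 1; noncomm_ring
      have hB : (inner ℂ (u * fᵢ * star u) (n₀ : M) : ℂ) = 0 := by
        rw [hip]
        have e : star (u * fᵢ * star u) * n₀ = u * (star fᵢ * (star u * n₀)) := by
          rw [star_mul, star_mul, star_star]; noncomm_ring
        rw [e, htr u (star fᵢ * (star u * n₀))]
        have e2 : (star fᵢ * (star u * n₀)) * u = star fᵢ * (star u * n₀ * u) := by noncomm_ring
        rw [e2]
        exact K.tau_F_A hfᵢ
          (show star u * n₀ * u ∈ A false from mul_mem (mul_mem (star_mem huA') (hN2 hn₀)) huA')
      have hC : (inner ℂ fᵢ (star u * y * u) : ℂ) = inner ℂ fᵢ fᵢ := by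
        rw [hzdec, inner_add_right, inner_add_right, hiWN nᵢ hnᵢ fᵢ (hFD hfᵢ),
          hiFG fᵢ hfᵢ gᵢ hgᵢ]
        ring
      rw [hxy, inner_sub_right, hB, hA', hC, hsqn fᵢ, sub_zero]
    · rw [mul_assoc, hnl u _ hu'u, hnr (star u) _ (by rw [star_star, hu'u])]
    · rw [hip]
      have e : star f * (u * fᵢ * star u) = (star f * (u * fᵢ)) * star u := by noncomm_ring
      rw [e, htr (star f * (u * fᵢ)) (star u)]
      have e2 : star u * (star f * (u * fᵢ)) = star u * (star f * (u * fᵢ)) := rfl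
      exact K.tau_cross (star_mem huA') (HS.E_star_zero hEu) huA' hEu hf hfᵢ
  obtain ⟨hP2a, hP2b, hP2c, hP2d⟩ :=
    piece u₂ n₂ f₂ g₂ hu₂A hbu₂ hu₂.1 hu₂.2 hn₂ hf₂ hg₂ hz₂
  obtain ⟨hP3a, hP3b, hP3c, hP3d⟩ :=
    piece u₃ n₃ f₃ g₃ hu₃A hbu₃ hu₃.1 hu₃.2 hn₃ hf₃ hg₃ hz₃
  set ξ₂ := u₂ * f₂ * star u₂ with hξ₂
  set ξ₃ := u₃ * f₃ * star u₃ with hξ₃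
  -- cross orthogonality of ξ₂ and ξ₃
  have hcross23 : (inner ℂ ξ₂ ξ₃ : ℂ) = 0 := by
    rw [hip]
    have e : star ξ₂ * ξ₃ = (u₂ * (star f₂ * (star u₂ * (u₃ * f₃)))) * star u₃ := by
      rw [hξ₂, hξ₃, star_mul, star_mul, star_star]; noncomm_ring
    rw [e, htr _ (star u₃)]
    have e2 : star u₃ * (u₂ * (star f₂ * (star u₂ * (u₃ * f₃)))) =
        (star u₃ * u₂) * (star f₂ * ((star u₂ * u₃) * f₃)) := by noncomm_ring
    rw [e2]
    have hE32 : E (star u₃ * u₂) = 0 := by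
      have e3 : star u₃ * u₂ = star (star u₂ * u₃) := by rw [star_mul, star_star]
      rw [e3, hEstar, hbu₂₃, star_zero]
    exact K.tau_cross (mul_mem (star_mem (show u₃ ∈ A false from hu₃A)) (show u₂ ∈ A false from hu₂A)) hE32
      (mul_mem (star_mem (show u₂ ∈ A false from hu₂A)) (show u₃ ∈ A false from hu₃A)) hbu₂₃ hf₂ hf₃
  -- Bessel inequality
  have hfx : (inner ℂ f (f + g) : ℂ) = ((‖f‖ : ℂ)) ^ 2 := by
    rw [inner_add_right, hiFG f hf g hg, add_zero, hsqn f]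
  have hbessel : ‖f‖ ^ 2 + ‖f₂‖ ^ 2 + ‖f₃‖ ^ 2 ≤ ‖f + g‖ ^ 2 := by
    set T := f + ξ₂ + ξ₃ with hT
    have h1 : ‖f + ξ₂‖ ^ 2 = ‖f‖ ^ 2 + ‖f₂‖ ^ 2 := by
      rw [hadd f ξ₂ hP2d, hP2c]
    have h2 : ‖T‖ ^ 2 = ‖f‖ ^ 2 + ‖f₂‖ ^ 2 + ‖f₃‖ ^ 2 := by
      rw [hT, hadd (f + ξ₂) ξ₃ (by rw [inner_add_left, hP3d, hcross23, add_zero]), h1, hP3c]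
    have h3 : Complex.re (inner ℂ (f + g) T : ℂ) = ‖f‖ ^ 2 + ‖f₂‖ ^ 2 + ‖f₃‖ ^ 2 := by
      have e4 : (inner ℂ (f + g) T : ℂ) = (starRingEnd ℂ) ((inner ℂ T (f + g) : ℂ)) := by
        rw [inner_conj_symm]
      rw [e4, Complex.conj_re, hT, inner_add_left, inner_add_left, hfx, hP2b, hP3b]
      simp [← Complex.ofReal_pow]
    have h0 : (0:ℝ) ≤ ‖(f + g) - T‖ ^ 2 := sq_nonneg _
    have h5 := hsub (f + g) T
    rw [h3, h2] at h5
    linarith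
  have hfg2 : ‖f + g‖ ^ 2 = ‖f‖ ^ 2 + ‖g‖ ^ 2 := hadd f g (hiFG f hf g hg)
  -- triangle bounds
  have hp2 : ‖f‖ - d ≤ ‖f₂‖ := by
    have h6 := norm_sub_norm_le f f₂
    have h7 : ‖f - f₂‖ ≤ d := le_trans hP2a hc₂d
    linarith
  have hp3 : ‖f‖ - d ≤ ‖f₃‖ := by
    have h6 := norm_sub_norm_le f f₃
    have h7 : ‖f - f₃‖ ≤ d := le_trans hP3a hc₃d
    linarith
  have hb2 : ‖f₂‖ ^ 2 + ‖f₃‖ ^ 2 ≤ ‖g‖ ^ 2 := by linarith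
  calc ‖f + g‖ ≤ ‖f‖ + ‖g‖ := norm_add_le f g
  _ ≤ 14 * d :=
    Stmt4Aux.arith_final (norm_nonneg f) (norm_nonneg g) (norm_nonneg f₂) (norm_nonneg f₃)
      hd0 hgfd hb2 hp2 hp3
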